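/- arXiv:0904.4614 — 4 statements merged into one kernel-verified Lean document; each statement's English description precedes it below -/
import Mathlib

section
/- Let E be a finite-dimensional vector space over a field K, and let U and V be linear subspaces of E with dim U = dim V. Then there exists a linear subspace W of E that is simultaneously a complement of U and of V in E, i.e., U ⊕ W = E and V ⊕ W = E (W is a common supplementary subspace of U and V). -/
open Module Submodule

section Aux

variable {K E : Type*} [Field K] [AddCommGroup E] [Module K E] [FiniteDimensional K E]

lemma aux_disjoint_span {U : Submodule K E} {x : E} (hx : x ∉ U) :
    Disjoint U (K ∙ x) := by
  rw [Submodule.disjoint_span_singleton]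
  intro hxU
  exact absurd hxU hx

lemma aux_finrank_sup_span {U : Submodule K E} {x : E} (hx : x ∉ U) :
    finrank K ↥(U ⊔ (K ∙ x)) = finrank K U + 1 := by
  have hx0 : x ≠ 0 := fun h => hx (h ▸ U.zero_mem)
  have := Submodule.finrank_sup_add_finrank_inf_eq U (K ∙ x)
  rw [(aux_disjoint_span hx).eq_bot, finrank_bot, finrank_span_singleton hx0] at this
  omega

lemma aux_exists_not_mem {U V : Submodule K E} (hU : U ≠ ⊤) (hV : V ≠ ⊤) :
    ∃ x : E, x ∉ U ∧ x ∉ V := by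
  obtain ⟨a, ha⟩ : ∃ a, a ∉ U := by
    simpa using (fun h => hU (Submodule.eq_top_iff'.2 h))
  obtain ⟨b, hb⟩ : ∃ b, b ∉ V := by
    simpa using (fun h => hV (Submodule.eq_top_iff'.2 h))
  by_cases haV : a ∉ V
  · exact ⟨a, ha, haV⟩
  by_cases hbU : b ∉ U
  · exact ⟨b, hbU, hb⟩
  push_neg at haV hbU
  refine ⟨a + b, fun h => ha ?_, fun h => hb ?_⟩
  · have := U.sub_mem h hbU; simpa using this
  · have := V.sub_mem h haV
    have : a + b - a ∈ V := V.sub_mem h haV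
    simpa using this

lemma aux_isCompl_step {U W : Submodule K E} {x : E} (hx : x ∉ U)
    (hc : IsCompl (U ⊔ (K ∙ x)) W) : IsCompl U (W ⊔ (K ∙ x)) := by
  constructor
  · rw [disjoint_def]
    intro u huU huW
    obtain ⟨w, hw, c, hc', rfl⟩ : ∃ w ∈ W, ∃ c ∈ (K ∙ x), u = w + c := by
      rcases Submodule.mem_sup.1 huW with ⟨w, hw, c, hc', rfl⟩
      exact ⟨w, hw, c, hc', rfl⟩
    have hwmem : w ∈ U ⊔ (K ∙ x) := by
      rw [← add_sub_cancel_right w c]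
      exact Submodule.sub_mem _ (le_sup_left (a := U) (b := K ∙ x) huU)
        (le_sup_right (a := U) (b := K ∙ x) hc')
    have hw0 : w = 0 := (disjoint_def.1 hc.disjoint.symm) w hw hwmem
    subst hw0
    rw [zero_add] at huU ⊢
    exact ((aux_disjoint_span hx).eq_bot ▸ Submodule.mem_inf.2 ⟨huU, hc'⟩ : c ∈ (⊥ : Submodule K E))
  · have h2 := hc.codisjoint
    rw [codisjoint_iff] at h2 ⊢
    rw [← h2, sup_comm W (K ∙ x), ← sup_assoc]

theorem aux_main (n : ℕ) : ∀ (U V : Submodule K E), finrank K U = finrank K V →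
    finrank K E - finrank K U ≤ n → ∃ W : Submodule K E, IsCompl U W ∧ IsCompl V W := by
  induction n with
  | zero =>
    intro U V h hn
    have hU : U = ⊤ := Submodule.eq_top_of_finrank_eq (by
      have := U.finrank_le
      omega)
    have hV : V = ⊤ := Submodule.eq_top_of_finrank_eq (by
      have := U.finrank_le
      omega)
    exact ⟨⊥, hU ▸ isCompl_top_bot, hV ▸ isCompl_top_bot⟩
  | succ n ih =>
    intro U V h hn
    by_cases hU : U = ⊤
    · have hV : V = ⊤ := Submodule.eq_top_of_finrank_eq (by
        rw [← h, hU]; exact (finrank_top K E))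
      exact ⟨⊥, hU ▸ isCompl_top_bot, hV ▸ isCompl_top_bot⟩
    · have hV : V ≠ ⊤ := fun hV => hU (Submodule.eq_top_of_finrank_eq (by
        rw [h, hV]; exact (finrank_top K E)))
      obtain ⟨x, hxU, hxV⟩ := aux_exists_not_mem hU hV
      have hU' := aux_finrank_sup_span hxU
      have hV' := aux_finrank_sup_span hxV
      have hle : finrank K ↥(U ⊔ (K ∙ x)) ≤ finrank K E := Submodule.finrank_le _
      obtain ⟨W, hW1, hW2⟩ := ih (U ⊔ (K ∙ x)) (V ⊔ (K ∙ x)) (by omega) (by omega)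
      exact ⟨W ⊔ (K ∙ x), aux_isCompl_step hxU hW1, aux_isCompl_step hxV hW2⟩

end Aux

/-- In a finite-dimensional vector space `E` over a field `K`, any two linear subspaces
of the same dimension admit a common complement. -/
theorem common_complement_of_finrank_eq
    {K E : Type*} [Field K] [AddCommGroup E] [Module K E] [FiniteDimensional K E]
    (U V : Submodule K E) (h : Module.finrank K U = Module.finrank K V) :
    ∃ W : Submodule K E, IsCompl U W ∧ IsCompl V W := by
  exact aux_main (Module.finrank K E - Module.finrank K U) U V h le_rfl
end

section
/- Let K, N, P be finite-dimensional smooth real manifolds without boundary with dim N = dim P = d, let η : K → N and θ : K → P be smooth submersions, and let m ∈ K. Then there exist an open neighborhood Ω of 0 in ℝᵈ and a smooth map c : Ω → K with c(0) = m such that η ∘ c is a diffeomorphism from Ω onto an open subset of N and θ ∘ c is a diffeomorphism from Ω onto an open subset of P. (This is the existence of a small d-disc through m simultaneously transverse to the η-fibers and the θ-fibers, mapped diffeomorphically onto open sets by both submersions, used in the proof that Morita-equivalent groupoids with bases of equal dimension d are linked by a groupoid with base of dimension d.) -/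
open scoped Manifold

open Set FiniteDimensional Module Submodule in
private lemma aux_exists_notMem' {E : Type*} [AddCommGroup E] [Module ℝ E]
    (p q : Submodule ℝ E) (hp : p ≠ ⊤) (hq : q ≠ ⊤) :
    ∃ v : E, v ∉ p ∧ v ∉ q := by
  obtain ⟨x, hx⟩ : ∃ x, x ∉ p := by
    by_contra h; push_neg at h; exact hp (eq_top_iff.2 fun z _ => h z)
  obtain ⟨y, hy⟩ : ∃ y, y ∉ q := by
    by_contra h; push_neg at h; exact hq (eq_top_iff.2 fun z _ => h z)
  by_cases hxq : x ∉ q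
  · exact ⟨x, hx, hxq⟩
  by_cases hyp : y ∉ p
  · exact ⟨y, hyp, hy⟩
  push_neg at hxq hyp
  refine ⟨x + y, fun h => hx ?_, fun h => hy ?_⟩
  · have := p.sub_mem h hyp; simpa using this
  · have := q.sub_mem h hxq; simpa using this

open Set FiniteDimensional Module Submodule in
private lemma aux_step' {E : Type*} [AddCommGroup E] [Module ℝ E]
    {V' p : Submodule ℝ E} {v : E} (hvp : v ∉ p)
    (h : IsCompl V' (p ⊔ span ℝ {v})) : IsCompl (V' ⊔ span ℝ {v}) p := by
  constructor
  · rw [disjoint_def]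
    intro x hxV hxp
    obtain ⟨w, hw, z, hz, rfl⟩ := Submodule.mem_sup.1 hxV
    obtain ⟨a, rfl⟩ := Submodule.mem_span_singleton.1 hz
    have hzmem : a • v ∈ p ⊔ span ℝ {v} :=
      Submodule.mem_sup_right (Submodule.mem_span_singleton.2 ⟨a, rfl⟩)
    have hwmem : w ∈ p ⊔ span ℝ {v} := by
      have h1 : w + a • v ∈ p ⊔ span ℝ {v} := Submodule.mem_sup_left hxp
      simpa using Submodule.sub_mem _ h1 hzmem
    have hw0 : w = 0 := disjoint_def.1 h.disjoint w hw hwmem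
    subst hw0
    simp only [zero_add] at hxp ⊢
    rcases eq_or_ne a 0 with ha | ha
    · simp [ha]
    · exact absurd ((Submodule.smul_mem_iff _ ha).1 hxp) hvp
  · rw [codisjoint_iff]
    have := codisjoint_iff.1 h.codisjoint
    rwa [sup_right_comm, sup_assoc]

open Set FiniteDimensional Module Submodule in
private lemma aux_common_compl' {E : Type*} [AddCommGroup E] [Module ℝ E]
    [FiniteDimensional ℝ E] : ∀ (n : ℕ) (p q : Submodule ℝ E),
    finrank ℝ E = finrank ℝ p + n → finrank ℝ E = finrank ℝ q + n →
    ∃ V : Submodule ℝ E, IsCompl V p ∧ IsCompl V q := by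
  intro n
  induction n with
  | zero =>
    intro p q hp hq
    have hp' : p = ⊤ := eq_top_of_finrank_eq (by omega)
    have hq' : q = ⊤ := eq_top_of_finrank_eq (by omega)
    exact ⟨⊥, by rw [hp', hq']; exact ⟨isCompl_bot_top, isCompl_bot_top⟩⟩
  | succ n ih =>
    intro p q hp hq
    have hpt : p ≠ ⊤ := by
      intro h; rw [h, finrank_top] at hp; omega
    have hqt : q ≠ ⊤ := by
      intro h; rw [h, finrank_top] at hq; omega
    obtain ⟨v, hvp, hvq⟩ := aux_exists_notMem' p q hpt hqt
    have hv0 : v ≠ 0 := fun h => hvp (h ▸ p.zero_mem)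
    have hspan : finrank ℝ (span ℝ {v} : Submodule ℝ E) = 1 := finrank_span_singleton hv0
    have hdp : p ⊓ span ℝ {v} = ⊥ := ((Submodule.disjoint_span_singleton' hv0).2 hvp).eq_bot
    have hdq : q ⊓ span ℝ {v} = ⊥ := ((Submodule.disjoint_span_singleton' hv0).2 hvq).eq_bot
    have hfp : finrank ℝ ↥(p ⊔ span ℝ {v}) = finrank ℝ p + 1 := by
      have := Submodule.finrank_sup_add_finrank_inf_eq p (span ℝ {v})
      rw [hdp] at this; simp [finrank_bot, hspan] at this; omega
    have hfq : finrank ℝ ↥(q ⊔ span ℝ {v}) = finrank ℝ q + 1 := by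
      have := Submodule.finrank_sup_add_finrank_inf_eq q (span ℝ {v})
      rw [hdq] at this; simp [finrank_bot, hspan] at this; omega
    obtain ⟨V', hV'p, hV'q⟩ := ih (p ⊔ span ℝ {v}) (q ⊔ span ℝ {v}) (by omega) (by omega)
    exact ⟨V' ⊔ span ℝ {v}, aux_step' hvp hV'p, aux_step' hvq hV'q⟩

open Set in
/-- One-sided version: given a parametrized disc `c` whose composition with the submersion `η`
has invertible derivative at `0` (read in the preferred chart), on a sufficiently small
neighborhood of `0` the composition `η ∘ c` is a diffeomorphism onto an open set. -/
private lemma aux_side'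
    {E : Type*} [NormedAddCommGroup E] [NormedSpace ℝ E] [FiniteDimensional ℝ E]
    {d : ℕ}
    {K : Type*} [TopologicalSpace K] [ChartedSpace E K]
    [IsManifold 𝓘(ℝ, E) (⊤ : ℕ∞) K]
    {N : Type*} [TopologicalSpace N] [ChartedSpace (EuclideanSpace ℝ (Fin d)) N]
    [IsManifold (𝓡 d) (⊤ : ℕ∞) N]
    (η : K → N) (hη : ContMDiff 𝓘(ℝ, E) (𝓡 d) (⊤ : ℕ∞) η)
    (c : EuclideanSpace ℝ (Fin d) → K)
    {Ω₀ : Set (EuclideanSpace ℝ (Fin d))} (hΩ₀ : IsOpen Ω₀)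
    (h0 : (0 : EuclideanSpace ℝ (Fin d)) ∈ Ω₀)
    (hc : ContMDiffOn (𝓡 d) 𝓘(ℝ, E) (⊤ : ℕ∞) c Ω₀)
    (A' : EuclideanSpace ℝ (Fin d) ≃L[ℝ] EuclideanSpace ℝ (Fin d))
    (hder : HasFDerivAt (fun x => extChartAt (𝓡 d) (η (c 0)) (η (c x)))
      (A' : EuclideanSpace ℝ (Fin d) →L[ℝ] EuclideanSpace ℝ (Fin d)) 0) :
    ∃ Ω' : Set (EuclideanSpace ℝ (Fin d)), Ω' ⊆ Ω₀ ∧ IsOpen Ω' ∧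
      (0 : EuclideanSpace ℝ (Fin d)) ∈ Ω' ∧
      ∀ Ω : Set (EuclideanSpace ℝ (Fin d)), IsOpen Ω → Ω ⊆ Ω' →
        Set.InjOn (η ∘ c) Ω ∧ IsOpen ((η ∘ c) '' Ω) ∧
        ∃ σ : N → EuclideanSpace ℝ (Fin d),
          ContMDiffOn (𝓡 d) (𝓡 d) (⊤ : ℕ∞) σ ((η ∘ c) '' Ω) ∧
          ∀ x ∈ Ω, σ (η (c x)) = x := by
  have hle1 : (1 : WithTop ℕ∞) ≤ ((⊤ : ℕ∞) : WithTop ℕ∞) := by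
    exact_mod_cast le_top
  set φ := extChartAt (𝓡 d) (η (c 0)) with hφ
  set F : EuclideanSpace ℝ (Fin d) → EuclideanSpace ℝ (Fin d) :=
    fun x => φ (η (c x)) with hFdef
  -- the composite η ∘ c
  have hηc : ContMDiffOn (𝓡 d) (𝓡 d) (⊤ : ℕ∞) (η ∘ c) Ω₀ := hη.comp_contMDiffOn hc
  have hcont : ContinuousOn (η ∘ c) Ω₀ := hηc.continuousOn
  -- Ω₁ : where η ∘ c lands in the chart source
  set Ω₁ : Set (EuclideanSpace ℝ (Fin d)) :=
    Ω₀ ∩ (η ∘ c) ⁻¹' (chartAt (EuclideanSpace ℝ (Fin d)) (η (c 0))).source with hΩ₁def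
  have hΩ₁ : IsOpen Ω₁ := hcont.isOpen_inter_preimage hΩ₀
    (chartAt (EuclideanSpace ℝ (Fin d)) (η (c 0))).open_source
  have h0Ω₁ : (0 : EuclideanSpace ℝ (Fin d)) ∈ Ω₁ := ⟨h0, mem_chart_source _ _⟩
  have hΩ₁sub : Ω₁ ⊆ Ω₀ := inter_subset_left
  have hmem : ∀ x ∈ Ω₁, η (c x) ∈ (chartAt (EuclideanSpace ℝ (Fin d)) (η (c 0))).source :=
    fun x hx => hx.2
  -- F is smooth on Ω₁
  have hF : ContMDiffOn (𝓡 d) (𝓡 d) (⊤ : ℕ∞) F Ω₁ := by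
    refine (contMDiffOn_extChartAt (x := η (c 0))).comp (hηc.mono hΩ₁sub) ?_
    exact fun x hx => hx.2
  have hFc : ContDiffOn ℝ ((⊤ : ℕ∞) : WithTop ℕ∞) F Ω₁ := contMDiffOn_iff_contDiffOn.1 hF
  have hF0 : ContDiffAt ℝ ((⊤ : ℕ∞) : WithTop ℕ∞) F 0 := hFc.contDiffAt (hΩ₁.mem_nhds h0Ω₁)
  -- inverse function theorem at 0
  set Φ := hF0.toOpenPartialHomeomorph F hder (by simp) with hΦdef
  have hΦcoe : (Φ : EuclideanSpace ℝ (Fin d) → EuclideanSpace ℝ (Fin d)) = F :=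
    ContDiffAt.toOpenPartialHomeomorph_coe _ _ _
  have h0Φ : (0 : EuclideanSpace ℝ (Fin d)) ∈ Φ.source :=
    ContDiffAt.mem_toOpenPartialHomeomorph_source _ _ _
  -- set where the derivative is invertible
  have hfderivcont : ContinuousOn (fderiv ℝ F) Ω₁ :=
    hFc.continuousOn_fderiv_of_isOpen hΩ₁ hle1
  set U : Set (EuclideanSpace ℝ (Fin d)) := Ω₁ ∩ (fderiv ℝ F) ⁻¹' {T | IsUnit T} with hUdef
  have hU : IsOpen U := hfderivcont.isOpen_inter_preimage hΩ₁ Units.isOpen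
  have h0U : (0 : EuclideanSpace ℝ (Fin d)) ∈ U := by
    refine ⟨h0Ω₁, ?_⟩
    have h1 : fderiv ℝ F 0 = (A' : EuclideanSpace ℝ (Fin d) →L[ℝ] EuclideanSpace ℝ (Fin d)) :=
      hder.fderiv
    rw [Set.mem_preimage, h1]
    exact ⟨(ContinuousLinearEquiv.unitsEquiv ℝ (EuclideanSpace ℝ (Fin d))).symm A', rfl⟩
  refine ⟨U ∩ Φ.source, inter_subset_left.trans (inter_subset_left.trans hΩ₁sub),
    hU.inter Φ.open_source, ⟨h0U, h0Φ⟩, ?_⟩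
  intro Ω hΩ hΩsub
  have hΩU : Ω ⊆ U := hΩsub.trans inter_subset_left
  have hΩΦ : Ω ⊆ Φ.source := hΩsub.trans inter_subset_right
  have hΩ₁' : Ω ⊆ Ω₁ := hΩU.trans inter_subset_left
  -- key identity
  have hkey : ∀ x ∈ Ω, Φ.symm (F x) = x := by
    intro x hx
    have := Φ.left_inv (hΩΦ hx)
    rwa [hΦcoe] at this
  have hsigma : ∀ x ∈ Ω, Φ.symm (φ (η (c x))) = x := fun x hx => hkey x hx
  -- injectivity
  have hinj : Set.InjOn (η ∘ c) Ω := by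
    intro x hx y hy hxy
    have h2 : Φ.symm (φ (η (c x))) = Φ.symm (φ (η (c y))) := by
      simp only [Function.comp_apply] at hxy; rw [hxy]
    rwa [hsigma x hx, hsigma y hy] at h2
  -- openness of the image
  have himF : IsOpen (F '' Ω) := by
    rw [← hΦcoe]; exact Φ.isOpen_image_of_subset_source hΩ hΩΦ
  have himeq : (η ∘ c) '' Ω = φ.source ∩ φ ⁻¹' (F '' Ω) := by
    ext y; constructor
    · rintro ⟨x, hx, rfl⟩
      have hsrc : η (c x) ∈ φ.source := by
        rw [hφ, extChartAt_source (I := 𝓡 d)]; exact hmem x (hΩ₁' hx)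
      exact ⟨hsrc, ⟨x, hx, rfl⟩⟩
    · rintro ⟨hy, hy'⟩
      obtain ⟨x, hx, hxy⟩ := hy'
      have hsrc : η (c x) ∈ φ.source := by
        rw [hφ, extChartAt_source (I := 𝓡 d)]; exact hmem x (hΩ₁' hx)
      exact ⟨x, hx, φ.injOn hsrc hy hxy⟩
  have himopen : IsOpen ((η ∘ c) '' Ω) := by
    rw [himeq, hφ]
    exact (continuousOn_extChartAt (I := 𝓡 d) (η (c 0))).isOpen_inter_preimage
      (isOpen_extChartAt_source (I := 𝓡 d) _) himF
  -- the smooth local inverse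
  refine ⟨hinj, himopen, fun y => Φ.symm (φ y), ?_, hsigma⟩
  rintro _ ⟨x, hx, rfl⟩
  have hsrc : η (c x) ∈ (chartAt (EuclideanSpace ℝ (Fin d)) (η (c 0))).source :=
    hmem x (hΩ₁' hx)
  have h1 : ContMDiffAt (𝓡 d) 𝓘(ℝ, EuclideanSpace ℝ (Fin d)) (⊤ : ℕ∞) φ (η (c x)) :=
    (contMDiffOn_extChartAt (x := η (c 0))).contMDiffAt
      ((chartAt (EuclideanSpace ℝ (Fin d)) (η (c 0))).open_source.mem_nhds hsrc)
  -- smoothness of Φ.symm at φ (η (c x)) = F x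
  have hxU := hΩU hx
  obtain ⟨u, hu⟩ : IsUnit (fderiv ℝ F x) := hxU.2
  have hdiffx : DifferentiableAt ℝ F x :=
    (hFc.contDiffAt (hΩ₁.mem_nhds (hΩ₁' hx))).differentiableAt (by simp)
  have hderx : HasFDerivAt F
      ((ContinuousLinearEquiv.unitsEquiv ℝ (EuclideanSpace ℝ (Fin d)) u :
        EuclideanSpace ℝ (Fin d) ≃L[ℝ] EuclideanSpace ℝ (Fin d)) :
        EuclideanSpace ℝ (Fin d) →L[ℝ] EuclideanSpace ℝ (Fin d)) x := by
    have hecoe : ((ContinuousLinearEquiv.unitsEquiv ℝ (EuclideanSpace ℝ (Fin d)) u :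
        EuclideanSpace ℝ (Fin d) ≃L[ℝ] EuclideanSpace ℝ (Fin d)) :
        EuclideanSpace ℝ (Fin d) →L[ℝ] EuclideanSpace ℝ (Fin d)) = fderiv ℝ F x := by
      rw [← hu]; rfl
    rw [hecoe]; exact hdiffx.hasFDerivAt
  have hFtarget : F x ∈ Φ.target := by
    rw [← hΦcoe]; exact Φ.map_source (hΩΦ hx)
  have hsymmFx : Φ.symm (F x) = x := hkey x hx
  have h2 : ContDiffAt ℝ ((⊤ : ℕ∞) : WithTop ℕ∞) Φ.symm (F x) := by
    refine Φ.contDiffAt_symm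
      (f₀' := ContinuousLinearEquiv.unitsEquiv ℝ (EuclideanSpace ℝ (Fin d)) u) hFtarget ?_ ?_
    · rw [hsymmFx]; exact hderx
    · rw [hsymmFx]; exact hFc.contDiffAt (hΩ₁.mem_nhds (hΩ₁' hx))
  have h2' : ContMDiffAt 𝓘(ℝ, EuclideanSpace ℝ (Fin d)) 𝓘(ℝ, EuclideanSpace ℝ (Fin d)) (⊤ : ℕ∞)
      Φ.symm (F x) := contMDiffAt_iff_contDiffAt.2 h2
  have h3 : ContMDiffAt (𝓡 d) (𝓡 d) (⊤ : ℕ∞) (fun y => Φ.symm (φ y)) (η (c x)) :=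
    h2'.comp (η (c x)) h1
  exact h3.contMDiffWithinAt

private lemma aux_deriv'
    {E : Type*} [NormedAddCommGroup E] [NormedSpace ℝ E] [FiniteDimensional ℝ E]
    {d : ℕ}
    {K : Type*} [TopologicalSpace K] [ChartedSpace E K]
    [IsManifold 𝓘(ℝ, E) (⊤ : ℕ∞) K]
    {M : Type*} [TopologicalSpace M] [ChartedSpace (EuclideanSpace ℝ (Fin d)) M]
    [IsManifold (𝓡 d) (⊤ : ℕ∞) M]
    (ξ : K → M) (hξ : ContMDiff 𝓘(ℝ, E) (𝓡 d) (⊤ : ℕ∞) ξ) (m : K)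
    (L : EuclideanSpace ℝ (Fin d) →L[ℝ] E) :
    HasFDerivAt (fun x => extChartAt (𝓡 d) (ξ m)
        (ξ ((extChartAt 𝓘(ℝ, E) m).symm (extChartAt 𝓘(ℝ, E) m m + L x))))
      ((mfderiv 𝓘(ℝ, E) (𝓡 d) ξ m).comp L) 0 := by
  have hle1 : (1 : ℕ∞) ≤ (⊤ : ℕ∞) := le_top
  have hle1' : (1 : WithTop ℕ∞) ≤ ((⊤ : ℕ∞) : WithTop ℕ∞) := by exact_mod_cast le_top
  set z₀ : E := extChartAt 𝓘(ℝ, E) m m with hz₀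
  have hmd : MDifferentiableAt 𝓘(ℝ, E) (𝓡 d) ξ m := hξ.mdifferentiableAt (by simp)
  have hG : ContDiffAt ℝ ((⊤ : ℕ∞) : WithTop ℕ∞)
      (writtenInExtChartAt 𝓘(ℝ, E) (𝓡 d) m ξ) z₀ := by
    have h1 := (contMDiffAt_iff.1 (hξ.contMDiffAt (x := m))).2
    rwa [ModelWithCorners.range_eq_univ, contDiffWithinAt_univ] at h1
  have hAeq : mfderiv 𝓘(ℝ, E) (𝓡 d) ξ m
      = fderiv ℝ (writtenInExtChartAt 𝓘(ℝ, E) (𝓡 d) m ξ) z₀ := by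
    rw [hmd.mfderiv, ModelWithCorners.range_eq_univ, fderivWithin_univ]
  have hGder : HasFDerivAt (writtenInExtChartAt 𝓘(ℝ, E) (𝓡 d) m ξ)
      (mfderiv 𝓘(ℝ, E) (𝓡 d) ξ m) z₀ := by
    rw [hAeq]
    exact (hG.differentiableAt (by simp)).hasFDerivAt
  have haffder : HasFDerivAt (fun x => z₀ + L x)
      (L : EuclideanSpace ℝ (Fin d) →L[ℝ] E) 0 := L.hasFDerivAt.const_add z₀
  have h2 : HasFDerivAt (writtenInExtChartAt 𝓘(ℝ, E) (𝓡 d) m ξ)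
      (mfderiv 𝓘(ℝ, E) (𝓡 d) ξ m) ((fun x => z₀ + L x) 0) := by
    simpa using hGder
  exact h2.comp 0 haffder

/-- If `η : K → N` and `θ : K → P` are smooth submersions onto manifolds of the same
dimension `d` (manifolds without boundary, not assumed Hausdorff or second countable), then
through any point `m : K` there is a small smooth `d`-disc, parametrized by an open
neighborhood `Ω` of `0` in `ℝᵈ`, which both `η` and `θ` map diffeomorphically onto open
subsets of `N` and `P` respectively. -/
theorem exists_common_transverse_disc
    {E : Type*} [NormedAddCommGroup E] [NormedSpace ℝ E] [FiniteDimensional ℝ E]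
    (d : ℕ)
    {K : Type*} [TopologicalSpace K] [ChartedSpace E K]
    [IsManifold 𝓘(ℝ, E) (⊤ : ℕ∞) K]
    {N : Type*} [TopologicalSpace N] [ChartedSpace (EuclideanSpace ℝ (Fin d)) N]
    [IsManifold (𝓡 d) (⊤ : ℕ∞) N]
    {P : Type*} [TopologicalSpace P] [ChartedSpace (EuclideanSpace ℝ (Fin d)) P]
    [IsManifold (𝓡 d) (⊤ : ℕ∞) P]
    (η : K → N) (hη : ContMDiff 𝓘(ℝ, E) (𝓡 d) (⊤ : ℕ∞) η)
    (hη' : ∀ x : K, Function.Surjective ⇑(mfderiv 𝓘(ℝ, E) (𝓡 d) η x))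
    (θ : K → P) (hθ : ContMDiff 𝓘(ℝ, E) (𝓡 d) (⊤ : ℕ∞) θ)
    (hθ' : ∀ x : K, Function.Surjective ⇑(mfderiv 𝓘(ℝ, E) (𝓡 d) θ x))
    (m : K) :
    ∃ (Ω : Set (EuclideanSpace ℝ (Fin d))) (c : EuclideanSpace ℝ (Fin d) → K),
      IsOpen Ω ∧ (0 : EuclideanSpace ℝ (Fin d)) ∈ Ω ∧
      ContMDiffOn (𝓡 d) 𝓘(ℝ, E) (⊤ : ℕ∞) c Ω ∧ c 0 = m ∧
      (Set.InjOn (η ∘ c) Ω ∧ IsOpen ((η ∘ c) '' Ω) ∧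
        ∃ σ : N → EuclideanSpace ℝ (Fin d),
          ContMDiffOn (𝓡 d) (𝓡 d) (⊤ : ℕ∞) σ ((η ∘ c) '' Ω) ∧
          ∀ x ∈ Ω, σ (η (c x)) = x) ∧
      (Set.InjOn (θ ∘ c) Ω ∧ IsOpen ((θ ∘ c) '' Ω) ∧
        ∃ τ : P → EuclideanSpace ℝ (Fin d),
          ContMDiffOn (𝓡 d) (𝓡 d) (⊤ : ℕ∞) τ ((θ ∘ c) '' Ω) ∧
          ∀ x ∈ Ω, τ (θ (c x)) = x) := by
  classical
  have hle1 : (1 : ℕ∞) ≤ (⊤ : ℕ∞) := le_top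
  have hle1' : (1 : WithTop ℕ∞) ≤ ((⊤ : ℕ∞) : WithTop ℕ∞) := by exact_mod_cast le_top
  -- the derivatives of the two submersions at m
  set A : E →L[ℝ] EuclideanSpace ℝ (Fin d) := mfderiv 𝓘(ℝ, E) (𝓡 d) η m with hAdef
  set B : E →L[ℝ] EuclideanSpace ℝ (Fin d) := mfderiv 𝓘(ℝ, E) (𝓡 d) θ m with hBdef
  have hA : Function.Surjective ⇑A := hη' m
  have hB : Function.Surjective ⇑B := hθ' m
  -- a common complement of the two kernels
  have hker : ∀ C : E →L[ℝ] EuclideanSpace ℝ (Fin d), Function.Surjective ⇑C →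
      Module.finrank ℝ E = Module.finrank ℝ (LinearMap.ker (C : E →ₗ[ℝ] EuclideanSpace ℝ (Fin d))) + d := by
    intro C hC
    have h := LinearMap.finrank_range_add_finrank_ker (C : E →ₗ[ℝ] EuclideanSpace ℝ (Fin d))
    have hr : LinearMap.range (C : E →ₗ[ℝ] EuclideanSpace ℝ (Fin d)) = ⊤ :=
      LinearMap.range_eq_top.2 hC
    rw [hr, finrank_top, finrank_euclideanSpace_fin] at h
    have hk : LinearMap.ker (C : E →ₗ[ℝ] EuclideanSpace ℝ (Fin d)) = LinearMap.ker (C : E →ₗ[ℝ] EuclideanSpace ℝ (Fin d)) := rfl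
    rw [hk] at h
    omega
  obtain ⟨V, hVA, hVB⟩ :=
    aux_common_compl' d (LinearMap.ker (A : E →ₗ[ℝ] EuclideanSpace ℝ (Fin d))) (LinearMap.ker (B : E →ₗ[ℝ] EuclideanSpace ℝ (Fin d))) (hker A hA) (hker B hB)
  have hVd : Module.finrank ℝ V = d := by
    have h1 := Submodule.finrank_add_eq_of_isCompl hVA
    have h2 := hker A hA
    omega
  have hfr : Module.finrank ℝ (EuclideanSpace ℝ (Fin d)) = Module.finrank ℝ V := by
    rw [finrank_euclideanSpace_fin, hVd]
  set f : EuclideanSpace ℝ (Fin d) ≃ₗ[ℝ] V := LinearEquiv.ofFinrankEq _ _ hfr with hfdef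
  set Llin : EuclideanSpace ℝ (Fin d) →ₗ[ℝ] E :=
    V.subtype ∘ₗ (f : EuclideanSpace ℝ (Fin d) →ₗ[ℝ] V) with hLlindef
  set L : EuclideanSpace ℝ (Fin d) →L[ℝ] E := LinearMap.toContinuousLinearMap Llin with hLdef
  have key : ∀ (C : E →L[ℝ] EuclideanSpace ℝ (Fin d)),
      IsCompl V (LinearMap.ker (C : E →ₗ[ℝ] EuclideanSpace ℝ (Fin d))) →
      Function.Bijective ((C : E →ₗ[ℝ] EuclideanSpace ℝ (Fin d)) ∘ₗ Llin) := by
    intro C hVC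
    have hinj : Function.Injective ((C : E →ₗ[ℝ] EuclideanSpace ℝ (Fin d)) ∘ₗ Llin) := by
      intro x y hxy
      have h0 : C (Llin (x - y)) = 0 := by
        simp only [hLlindef, LinearMap.comp_apply] at hxy
        simp only [map_sub]
        simp only [hLlindef, LinearMap.comp_apply]
        exact sub_eq_zero.2 hxy
      have hkerm : Llin (x - y) ∈ LinearMap.ker (C : E →ₗ[ℝ] EuclideanSpace ℝ (Fin d)) := by simpa using h0
      have hVm : Llin (x - y) ∈ V := (f (x - y)).2
      have hz : Llin (x - y) = 0 :=
        Submodule.disjoint_def.1 hVC.disjoint _ hVm hkerm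
      have hf0 : f (x - y) = 0 := by
        apply Subtype.ext; simpa [hLlindef] using hz
      have hxy0 := f.map_eq_zero_iff.1 hf0
      exact sub_eq_zero.1 hxy0
    exact ⟨hinj, (LinearMap.injective_iff_surjective).1 hinj⟩
  set A' : EuclideanSpace ℝ (Fin d) ≃L[ℝ] EuclideanSpace ℝ (Fin d) :=
    (LinearEquiv.ofBijective _ (key A hVA)).toContinuousLinearEquiv with hA'def
  set B' : EuclideanSpace ℝ (Fin d) ≃L[ℝ] EuclideanSpace ℝ (Fin d) :=
    (LinearEquiv.ofBijective _ (key B hVB)).toContinuousLinearEquiv with hB'def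
  have hA'coe : (A' : EuclideanSpace ℝ (Fin d) →L[ℝ] EuclideanSpace ℝ (Fin d)) = A.comp L := by
    ext x; rfl
  have hB'coe : (B' : EuclideanSpace ℝ (Fin d) →L[ℝ] EuclideanSpace ℝ (Fin d)) = B.comp L := by
    ext x; rfl
  -- the disc
  set z₀ : E := extChartAt 𝓘(ℝ, E) m m with hz₀
  set c : EuclideanSpace ℝ (Fin d) → K :=
    fun x => (extChartAt 𝓘(ℝ, E) m).symm (z₀ + L x) with hcdef
  have hc0 : c 0 = m := by
    simp only [hcdef, map_zero, add_zero]
    exact extChartAt_to_inv m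
  set Ω₀ : Set (EuclideanSpace ℝ (Fin d)) :=
    (fun x => z₀ + L x) ⁻¹' (extChartAt 𝓘(ℝ, E) m).target with hΩ₀def
  have hΩ₀ : IsOpen Ω₀ :=
    (isOpen_extChartAt_target m).preimage (continuous_const.add L.continuous)
  have h0Ω₀ : (0 : EuclideanSpace ℝ (Fin d)) ∈ Ω₀ := by
    simp only [hΩ₀def, Set.mem_preimage, map_zero, add_zero]
    exact mem_extChartAt_target m
  have haff : ContMDiff (𝓡 d) 𝓘(ℝ, E) (⊤ : ℕ∞) (fun x => z₀ + L x) := by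
    rw [contMDiff_iff_contDiff]
    exact contDiff_const.add L.contDiff
  have hc : ContMDiffOn (𝓡 d) 𝓘(ℝ, E) (⊤ : ℕ∞) c Ω₀ := by
    refine (contMDiffOn_extChartAt_symm m).comp haff.contMDiffOn ?_
    exact fun x hx => hx
  have hderη : HasFDerivAt (fun x => extChartAt (𝓡 d) (η (c 0)) (η (c x)))
      (A' : EuclideanSpace ℝ (Fin d) →L[ℝ] EuclideanSpace ℝ (Fin d)) 0 := by
    rw [hA'coe, hc0]; exact aux_deriv' η hη m L
  have hderθ : HasFDerivAt (fun x => extChartAt (𝓡 d) (θ (c 0)) (θ (c x)))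
      (B' : EuclideanSpace ℝ (Fin d) →L[ℝ] EuclideanSpace ℝ (Fin d)) 0 := by
    rw [hB'coe, hc0]; exact aux_deriv' θ hθ m L
  -- apply the one-sided lemma on both sides
  obtain ⟨Ω₁', hsub₁, hopen₁, h0₁, hprop₁⟩ := aux_side' η hη c hΩ₀ h0Ω₀ hc A' hderη
  obtain ⟨Ω₂', hsub₂, hopen₂, h0₂, hprop₂⟩ := aux_side' θ hθ c hΩ₀ h0Ω₀ hc B' hderθ
  refine ⟨Ω₁' ∩ Ω₂', c, hopen₁.inter hopen₂, ⟨h0₁, h0₂⟩,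
    hc.mono (Set.inter_subset_left.trans hsub₁), hc0,
    hprop₁ _ (hopen₁.inter hopen₂) Set.inter_subset_left,
    hprop₂ _ (hopen₁.inter hopen₂) Set.inter_subset_right⟩
end

section
/- Fix n ∈ ℕ and let X be a topological space (not assumed Hausdorff) such that every point of X has an open neighborhood homeomorphic to an open subset of ℝⁿ. Then there exist a Hausdorff topological space Y, in which every point also has an open neighborhood homeomorphic to an open subset of ℝⁿ, and a surjective local homeomorphism j : Y → X. (This is the 'covering trick': replacing a possibly non-Hausdorff manifold by the disjoint union of Euclidean chart domains, used to show that Morita-equivalent object-separated groupoids are linked by an object-separated groupoid.) -/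
/-- Every point of `Z` has an open neighborhood homeomorphic to an open subset of `ℝⁿ`. -/
def LocallyEuclidean (n : ℕ) (Z : Type*) [TopologicalSpace Z] : Prop :=
  ∀ z : Z, ∃ (U : Set Z) (V : Set (Fin n → ℝ)),
    z ∈ U ∧ IsOpen U ∧ IsOpen V ∧ Nonempty (U ≃ₜ V)

/-- The covering trick: any (possibly non-Hausdorff) `n`-dimensional topological manifold `X`
admits a surjective local homeomorphism `j : Y → X` from a Hausdorff `n`-dimensional
topological manifold `Y` (e.g. the disjoint union of Euclidean chart domains). -/
theorem exists_hausdorff_cover_of_locallyEuclidean (n : ℕ) {X : Type u} [TopologicalSpace X]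
    (hX : LocallyEuclidean n X) :
    ∃ (Y : Type u) (_ : TopologicalSpace Y), T2Space Y ∧ LocallyEuclidean n Y ∧
      ∃ j : Y → X, Function.Surjective j ∧ IsLocalHomeomorph j := by
  choose U V hmem hUopen hVopen hne using hX
  let e : ∀ x : X, (U x) ≃ₜ (V x) := fun x => Classical.choice (hne x)
  refine ⟨Σ x : X, (U x), inferInstance, ?_, ?_, fun p => (p.2 : X), ?_, ?_⟩
  · haveI : ∀ x : X, T2Space (U x) := fun x => (e x).isEmbedding.t2Space
    infer_instance
  · rintro ⟨x, u⟩
    have hemb : Topology.IsOpenEmbedding (Sigma.mk (β := fun x => (U x : Set X)) x) :=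
      Topology.IsOpenEmbedding.sigmaMk
    refine ⟨Set.range (Sigma.mk x), V x, ⟨u, rfl⟩, hemb.isOpen_range, hVopen x,
      ⟨(hemb.isEmbedding.toHomeomorph.symm.trans (e x))⟩⟩
  · intro x
    exact ⟨⟨x, ⟨x, hmem x⟩⟩, rfl⟩
  · rw [isLocalHomeomorph_iff_isOpenEmbedding_restrict]
    rintro ⟨x, u⟩
    have hemb : Topology.IsOpenEmbedding (Sigma.mk (β := fun x => (U x : Set X)) x) :=
      Topology.IsOpenEmbedding.sigmaMk
    refine ⟨Set.range (Sigma.mk x),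
      hemb.isOpen_range.mem_nhds ⟨u, rfl⟩, ?_⟩
    have key : (Set.range (Sigma.mk (β := fun x => (U x : Set X)) x)).domRestrict
        (fun p : Σ x : X, (U x) => (p.2 : X)) =
        (Subtype.val : (U x) → X) ∘ hemb.isEmbedding.toHomeomorph.symm := by
      funext p
      obtain ⟨w, hw⟩ := p.2
      have hp : hemb.isEmbedding.toHomeomorph.symm p = w := by
        apply hemb.isEmbedding.toHomeomorph.injective
        simp [Topology.IsEmbedding.toHomeomorph]
        exact (Subtype.ext hw).symm
      simp only [Function.comp_apply, hp, Set.domRestrict_apply]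
      rw [← hw]
    rw [key]
    exact ((hUopen x).isOpenEmbedding_subtypeVal).comp
      hemb.isEmbedding.toHomeomorph.symm.isOpenEmbedding
end

section
/- Let G and H be groupoids (categories in which every morphism is invertible) and let φ : G ⥤ H be a fully faithful functor that is surjective on objects. Let V be a set of arrows of H that generates a full subgroupoid of H, and let U₀ be a set of objects of G such that φ(U₀) contains the base of V. Define U to be the set of arrows g of G whose source and target both belong to U₀ and such that φ(g) ∈ V. Then U generates a full subgroupoid of G. (This is the algebraic content of the hard direction of the lemma proving Morita-invariance of compact generation: lifting a fully generating set along a Morita morphism by decomposing φ(g) as a product of generators and lifting each factor using fullness, then concluding by faithfulness.) -/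
open CategoryTheory

/-- The base of a family of arrows `S` of a groupoid: the objects occurring as source or
target of some arrow in `S`. -/
def arrowBase {G : Type*} [Groupoid G] (S : ∀ a b : G, Set (a ⟶ b)) : Set G :=
  {x : G | (∃ (b : G) (f : x ⟶ b), f ∈ S x b) ∨ (∃ (a : G) (f : a ⟶ x), f ∈ S a x)}

/-- A family of arrows `S` generates a full subgroupoid if every arrow whose source and
target lie in the base of `S` belongs to the subgroupoid generated by `S`. -/
def GeneratesFull {G : Type*} [Groupoid G] (S : ∀ a b : G, Set (a ⟶ b)) : Prop :=
  ∀ a b : G, a ∈ arrowBase S → b ∈ arrowBase S →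
    ∀ f : a ⟶ b, f ∈ (Subgroupoid.generated S).arrows a b

/-- Lifting a fully generating family of arrows along a Morita morphism: if
`φ : G ⥤ H` is fully faithful and surjective on objects, `V` generates a full subgroupoid
of `H`, and `U₀` is a set of objects of `G` whose image contains the base of `V`, then the
family of arrows of `G` with source and target in `U₀` and image in `V` generates a full
subgroupoid of `G`. -/
theorem generatesFull_lift_of_fullyFaithful_surjObj
    {G H : Type*} [Groupoid G] [Groupoid H] (φ : G ⥤ H)
    (hfull : φ.Full) (hfaithful : φ.Faithful) (hsurj : Function.Surjective φ.obj)
    (V : ∀ a b : H, Set (a ⟶ b)) (hV : GeneratesFull V)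
    (U₀ : Set G) (hU₀ : arrowBase V ⊆ φ.obj '' U₀) :
    GeneratesFull (fun a b : G =>
      {g : a ⟶ b | a ∈ U₀ ∧ b ∈ U₀ ∧ φ.map g ∈ V (φ.obj a) (φ.obj b)}) := by
  haveI := hfull; haveI := hfaithful
  set U : ∀ a b : G, Set (a ⟶ b) := fun a b : G =>
      {g : a ⟶ b | a ∈ U₀ ∧ b ∈ U₀ ∧ φ.map g ∈ V (φ.obj a) (φ.obj b)} with hU
  -- the subgroupoid of `H` of arrows whose every lift over `U₀` lies in `generated U`
  set W : Subgroupoid H :=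
    { arrows := fun x y => {h : x ⟶ y | x ∈ arrowBase V ∧ y ∈ arrowBase V ∧
        ∀ (a b : G) (ha : φ.obj a = x) (hb : φ.obj b = y), a ∈ U₀ → b ∈ U₀ →
          φ.preimage (eqToHom ha ≫ h ≫ eqToHom hb.symm) ∈
            (Subgroupoid.generated U).arrows a b}
      inv := by
        rintro x y h ⟨hx, hy, hlift⟩
        refine ⟨hy, hx, ?_⟩
        rintro a b ha hb haU hbU
        subst ha; subst hb
        have hp := hlift b a rfl rfl hbU haU
        simp only [eqToHom_refl, Category.id_comp, Category.comp_id] at hp ⊢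
        have : φ.preimage (Groupoid.inv h) = Groupoid.inv (φ.preimage h) := by
          apply hfaithful.map_injective
          simp [Groupoid.inv_eq_inv]
        rw [this]
        exact (Subgroupoid.generated U).inv hp
      mul := by
        rintro x y z h ⟨hx, hy, hlift⟩ h' ⟨hy', hz, hlift'⟩
        refine ⟨hx, hz, ?_⟩
        rintro a c ha hc haU hcU
        subst ha; subst hc
        obtain ⟨b, hbU, hb⟩ := hU₀ hy
        have hp := hlift a b rfl hb haU hbU
        have hq := hlift' b c hb rfl hbU hcU
        simp only [eqToHom_refl, Category.id_comp, Category.comp_id] at hp hq ⊢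
        have : φ.preimage (h ≫ h') =
            φ.preimage (h ≫ eqToHom hb.symm) ≫ φ.preimage (eqToHom hb ≫ h') := by
          apply hfaithful.map_injective
          simp
        rw [this]
        exact (Subgroupoid.generated U).mul hp hq }
  -- `V ≤ W`
  have hVW : W ∈ {S : Subgroupoid H | ∀ c d, V c d ⊆ S.arrows c d} := by
    intro x y h hh
    refine ⟨Or.inl ⟨y, h, hh⟩, Or.inr ⟨x, h, hh⟩, ?_⟩
    rintro a b ha hb haU hbU
    subst ha; subst hb
    apply Subgroupoid.subset_generated U a b
    refine ⟨haU, hbU, ?_⟩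
    simpa using hh
  have hgen : Subgroupoid.generated V ≤ W := sInf_le hVW
  -- main argument
  intro a b ha hb f
  -- extract: endpoints in `U₀` and images in `arrowBase V`
  have key : ∀ c : G, c ∈ arrowBase U → c ∈ U₀ ∧ φ.obj c ∈ arrowBase V := by
    rintro c (⟨d, g, hcU, hdU, hg⟩ | ⟨d, g, hdU, hcU, hg⟩)
    · exact ⟨hcU, Or.inl ⟨φ.obj d, φ.map g, hg⟩⟩
    · exact ⟨hcU, Or.inr ⟨φ.obj d, φ.map g, hg⟩⟩
  obtain ⟨haU, hav⟩ := key a ha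
  obtain ⟨hbU, hbv⟩ := key b hb
  have hmem : φ.map f ∈ W.arrows (φ.obj a) (φ.obj b) :=
    (Subgroupoid.le_iff _ _).mp hgen (hV (φ.obj a) (φ.obj b) hav hbv (φ.map f))
  have := hmem.2.2 a b rfl rfl haU hbU
  simpa using this
end
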